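/- Let 𝒜 = (Q, δ, ε) be a geometrically minimal DFA over Σ with language ℒ and path language tree T. Then a portrait σ = (ᵛσ)_{v∈ℒ} defines an automorphism of T if and only if it is admissible, i.e. for every v ∈ ℒ the injection ᵛσ is a permutation of Σ(q(v)) satisfying δ(q(v), ᵛσ(α)) = δ(q(v), α) for all α ∈ Σ(v). -/

import Mathlib

/-- A rooted directed multigraph. -/
structure RGraph where
  V : Type
  E : Type
  s : E → V
  t : E → V
  root : V

namespace RGraph

/-- `l` is a path: consecutive edges are composable. -/
def IsPath (A : RGraph) (l : List A.E) : Prop :=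
  l.Chain' (fun e f => A.t e = A.s f)

/-- `l` is a path starting at the vertex `q`. -/
def PathFrom (A : RGraph) (q : A.V) (l : List A.E) : Prop :=
  A.IsPath l ∧ ∀ e ∈ l.head?, A.s e = q

/-- The target of the path `l` started at `q` (equal to `q` for the empty path). -/
def pathTarget (A : RGraph) (q : A.V) (l : List A.E) : A.V :=
  l.foldl (fun _ e => A.t e) q

@[simp] lemma pathTarget_nil (A : RGraph) (q : A.V) : A.pathTarget q [] = q := rfl

@[simp] lemma pathTarget_cons (A : RGraph) (q : A.V) (a : A.E) (l : List A.E) :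
    A.pathTarget q (a :: l) = A.pathTarget (A.t a) l := rfl

lemma pathTarget_append (A : RGraph) (q : A.V) (l l' : List A.E) :
    A.pathTarget q (l ++ l') = A.pathTarget (A.pathTarget q l) l' := by
  simp [pathTarget]

@[simp] lemma pathTarget_append_single (A : RGraph) (q : A.V) (l : List A.E) (e : A.E) :
    A.pathTarget q (l ++ [e]) = A.t e := by
  rw [pathTarget_append]; rfl

lemma pathFrom_nil (A : RGraph) (q : A.V) : A.PathFrom q [] :=
  ⟨List.isChain_nil, by simp⟩

lemma pathTarget_getLast {A : RGraph} {q : A.V} {l : List A.E} {x : A.E}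
    (hx : x ∈ l.getLast?) : A.pathTarget q l = A.t x := by
  induction l generalizing q with
  | nil => simp at hx
  | cons a l ih =>
    cases l with
    | nil => simp at hx; subst hx; rfl
    | cons b l =>
      rw [List.getLast?_cons_cons] at hx
      simpa using ih (q := A.t a) hx

lemma pathFrom_append_single {A : RGraph} {q : A.V} {l : List A.E} {e : A.E}
    (h : A.PathFrom q l) (he : A.s e = A.pathTarget q l) :
    A.PathFrom q (l ++ [e]) := by
  constructor
  · show List.IsChain _ _
    apply List.isChain_append.mpr
    refine ⟨h.1, List.isChain_singleton _, ?_⟩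
    intro x hx y hy
    simp at hy
    subst hy
    rw [he]
    exact (pathTarget_getLast hx).symm
  · intro f hf
    cases l with
    | nil =>
      simp at hf
      subst hf
      simpa using he
    | cons a l =>
      simp at hf
      subst hf
      exact h.2 a (by simp)

/-- `w` is reachable from `q` by an oriented path. -/
def Reach (A : RGraph) (q w : A.V) : Prop :=
  ∃ l, A.PathFrom q l ∧ A.pathTarget q l = w

lemma reach_self (A : RGraph) (q : A.V) : A.Reach q q :=
  ⟨[], A.pathFrom_nil q, rfl⟩

lemma reach_target {A : RGraph} {q : A.V} {e : A.E} (h : A.Reach q (A.s e)) :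
    A.Reach q (A.t e) := by
  obtain ⟨l, hl, ht⟩ := h
  exact ⟨l ++ [e], pathFrom_append_single hl ht.symm, by simp⟩

/-- A graph is connected (as a rooted directed graph) if every vertex is reachable
from the root. -/
def Connected (A : RGraph) : Prop := ∀ w : A.V, A.Reach A.root w

/-- A graph is a tree if the target map from paths emanating from the root to
vertices is a bijection. -/
def IsTree (A : RGraph) : Prop :=
  Function.Bijective
    (fun l : {l : List A.E // A.PathFrom A.root l} => A.pathTarget A.root l.1)

/-- A graph is locally finite if every vertex has finitely many outgoing edges. -/
def LocallyFinite (A : RGraph) : Prop := ∀ q : A.V, Finite {e : A.E // A.s e = q}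

/-- Adjacency: there is an edge from `v` to `w`. -/
def Adj (A : RGraph) (v w : A.V) : Prop := ∃ e, A.s e = v ∧ A.t e = w

/-- The induced rooted subgraph on all vertices reachable from `q` (the "cone" at `q`). -/
def subgraph (A : RGraph) (q : A.V) : RGraph where
  V := {w // A.Reach q w}
  E := {e // A.Reach q (A.s e)}
  s := fun e => ⟨A.s e.1, e.2⟩
  t := fun e => ⟨A.t e.1, reach_target e.2⟩
  root := ⟨q, A.reach_self q⟩

/-- The truncation of the cone at `v` to vertices at distance at most `d` from `v`. -/
def trunc (A : RGraph) (v : A.V) (d : ℕ) : RGraph where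
  V := {w // ∃ l, A.PathFrom v l ∧ A.pathTarget v l = w ∧ l.length ≤ d}
  E := {e // ∃ l, A.PathFrom v l ∧ A.pathTarget v l = A.s e ∧ l.length < d}
  s := fun e => ⟨A.s e.1, e.2.imp fun _ h => ⟨h.1, h.2.1, h.2.2.le⟩⟩
  t := fun e => ⟨A.t e.1, by
    obtain ⟨l, h1, h2, h3⟩ := e.2
    exact ⟨l ++ [e.1], pathFrom_append_single h1 h2.symm, by simp,
      by simp only [List.length_append, List.length_singleton]; omega⟩⟩
  root := ⟨v, [], A.pathFrom_nil v, rfl, Nat.zero_le d⟩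

/-- The universal covering tree of `A`: vertices are the paths emanating from the root. -/
def cover (A : RGraph) : RGraph where
  V := {l : List A.E // A.PathFrom A.root l}
  E := {x : {l : List A.E // A.PathFrom A.root l} × A.E //
          A.s x.2 = A.pathTarget A.root x.1.1}
  s := fun x => x.1.1
  t := fun x => ⟨x.1.1.1 ++ [x.1.2], pathFrom_append_single x.1.1.2 x.2⟩
  root := ⟨[], A.pathFrom_nil _⟩

end RGraph

/-- A morphism of rooted directed multigraphs. -/
structure GraphHom (A B : RGraph) where
  v : A.V → B.V
  e : A.E → B.E
  root_eq : v A.root = B.root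
  s_eq : ∀ x, B.s (e x) = v (A.s x)
  t_eq : ∀ x, B.t (e x) = v (A.t x)

namespace GraphHom

variable {A B : RGraph}

/-- The unique path lifting property. -/
def UPLP (p : GraphHom A B) : Prop :=
  ∀ (q : A.V) (l' : List B.E), B.PathFrom (p.v q) l' →
    ∃! l : List A.E, A.PathFrom q l ∧ l.map p.e = l'

/-- A covering morphism: surjective on vertices, with the unique path lifting property. -/
def IsCovering (p : GraphHom A B) : Prop := Function.Surjective p.v ∧ p.UPLP

/-- An isomorphism of graphs: bijective on vertices and on edges. -/
def IsIso (p : GraphHom A B) : Prop := Function.Bijective p.v ∧ Function.Bijective p.e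

/-- The restriction of the edge map to the edges emanating from `q`. -/
def outMap (p : GraphHom A B) (q : A.V) :
    {e : A.E // A.s e = q} → {e' : B.E // B.s e' = p.v q} :=
  fun e => ⟨p.e e.1, by rw [p.s_eq, e.2]⟩

lemma isPath_map (p : GraphHom A B) {l : List A.E} (h : A.IsPath l) :
    B.IsPath (l.map p.e) := by
  show List.IsChain _ _
  rw [List.isChain_map]
  exact List.IsChain.imp (fun a b hab => by rw [p.t_eq, p.s_eq, hab]) h

lemma pathFrom_map (p : GraphHom A B) {q : A.V} {l : List A.E} (h : A.PathFrom q l) :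
    B.PathFrom (p.v q) (l.map p.e) := by
  refine ⟨p.isPath_map h.1, ?_⟩
  intro f hf
  cases l with
  | nil => simp at hf
  | cons a l =>
    simp at hf
    subst hf
    rw [p.s_eq, h.2 a (by simp)]

lemma pathTarget_map (p : GraphHom A B) (q : A.V) (l : List A.E) :
    B.pathTarget (p.v q) (l.map p.e) = p.v (A.pathTarget q l) := by
  induction l generalizing q with
  | nil => rfl
  | cons a l ih =>
    show B.pathTarget (B.t (p.e a)) (l.map p.e) = _
    rw [p.t_eq]
    exact ih (A.t a)

lemma reach_map (p : GraphHom A B) {q w : A.V} (h : A.Reach q w) :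
    B.Reach (p.v q) (p.v w) := by
  obtain ⟨l, hl, ht⟩ := h
  exact ⟨l.map p.e, p.pathFrom_map hl, by rw [p.pathTarget_map, ht]⟩

end GraphHom

/-- Two graphs are isomorphic. -/
def RGraph.Iso (A B : RGraph) : Prop := ∃ p : GraphHom A B, p.IsIso

/-- The universal covering morphism from the universal covering tree of `A` to `A`. -/
def RGraph.uCover (A : RGraph) : GraphHom A.cover A where
  v := fun l => A.pathTarget A.root l.1
  e := fun x => x.1.2
  root_eq := rfl
  s_eq := fun x => x.2
  t_eq := fun x => by
    show A.t x.1.2 = A.pathTarget A.root (x.1.1.1 ++ [x.1.2])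
    simp

/-- The morphism induced between universal covering trees by a morphism of graphs. -/
def GraphHom.coverMap {A B : RGraph} (p : GraphHom A B) : GraphHom A.cover B.cover where
  v := fun l => ⟨l.1.map p.e, by have := p.pathFrom_map l.2; rwa [p.root_eq] at this⟩
  e := fun x =>
    ⟨(⟨x.1.1.1.map p.e, by have := p.pathFrom_map x.1.1.2; rwa [p.root_eq] at this⟩,
      p.e x.1.2), by
        show B.s (p.e x.1.2) = B.pathTarget B.root (x.1.1.1.map p.e)
        rw [p.s_eq, x.2, ← p.root_eq, p.pathTarget_map]⟩
  root_eq := Subtype.ext rfl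
  s_eq := fun _ => rfl
  t_eq := fun x => by
    apply Subtype.ext
    simp [RGraph.cover]

/-- `A` is a covering quotient of `T`. -/
def IsCovQuotient (T A : RGraph) : Prop := ∃ p : GraphHom T A, p.IsCovering

/-- `A` is a minimal covering quotient of `T`: a covering quotient with the minimal
number of vertices among all covering quotients of `T`. -/
def IsMinCovQuotient (T A : RGraph) : Prop :=
  IsCovQuotient T A ∧
    ∀ B : RGraph, IsCovQuotient T B → Cardinal.mk A.V ≤ Cardinal.mk B.V

/-- `T` has finitely many cone types. -/
def FinManyCones (T : RGraph) : Prop :=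
  ∃ S : Set T.V, S.Finite ∧ ∀ v : T.V, ∃ w ∈ S, RGraph.Iso (T.subgraph v) (T.subgraph w)

/-- A self-similar tree: a locally finite tree with finitely many cone types. -/
def SelfSimilarTree (T : RGraph) : Prop := T.IsTree ∧ T.LocallyFinite ∧ FinManyCones T

namespace RGraph

/-- The automorphism group of a graph, realized as the group of root-preserving,
adjacency-preserving permutations of the vertex set (for trees this is the same as the
automorphism group in the sense of graph morphisms, since in a tree an edge is determined
by its endpoints). -/
def autGroup (T : RGraph) : Subgroup (Equiv.Perm T.V) where
  carrier := {g | g T.root = T.root ∧ ∀ v w, T.Adj v w ↔ T.Adj (g v) (g w)}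
  one_mem' := ⟨rfl, fun _ _ => Iff.rfl⟩
  mul_mem' := by
    rintro a b ⟨ha1, ha2⟩ ⟨hb1, hb2⟩
    refine ⟨?_, fun v w => ?_⟩
    · show a (b T.root) = T.root
      rw [hb1, ha1]
    · exact (hb2 v w).trans (ha2 (b v) (b w))
  inv_mem' := by
    rintro a ⟨ha1, ha2⟩
    refine ⟨?_, fun v w => ?_⟩
    · show a.symm T.root = T.root
      rw [Equiv.symm_apply_eq]
      exact ha1.symm
    · have h := ha2 (a⁻¹ v) (a⁻¹ w)
      simpa using h.symm

/-- The subgroup of permutations of the vertices fixing every vertex outside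
of the cone at `v`. -/
def fixOutside (T : RGraph) (v : T.V) : Subgroup (Equiv.Perm T.V) where
  carrier := {g | ∀ w, ¬ T.Reach v w → g w = w}
  one_mem' := fun _ _ => rfl
  mul_mem' := by
    intro a b ha hb w hw
    show a (b w) = w
    rw [hb w hw, ha w hw]
  inv_mem' := by
    intro a ha w hw
    show a.symm w = w
    rw [Equiv.symm_apply_eq]
    exact (ha w hw).symm

/-- The rigid stabilizer of the vertex `v`: automorphisms fixing every vertex
outside the subtree spanned by `v` and its descendants. -/
def rist (T : RGraph) (v : T.V) : Subgroup (Equiv.Perm T.V) :=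
  T.autGroup ⊓ T.fixOutside v

/-- The set of vertices at distance `n` from the root. -/
def level (T : RGraph) (n : ℕ) : Set T.V :=
  {v | ∃ l : List T.E, T.PathFrom T.root l ∧ T.pathTarget T.root l = v ∧ l.length = n}

/-- The `n`-th rigid level stabilizer: the subgroup generated by the rigid stabilizers
of the vertices at distance `n` from the root. -/
def ristLevel (T : RGraph) (n : ℕ) : Subgroup (Equiv.Perm T.V) :=
  ⨆ v ∈ T.level n, T.rist v

/-- The `n`-th rigid level stabilizer, as a subgroup of the automorphism group. -/
def ristIn (T : RGraph) (n : ℕ) : Subgroup ↥T.autGroup :=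
  (T.ristLevel n).comap T.autGroup.subtype

end RGraph

/-- A recurrent double edge: a pair of distinct parallel edges such that there is an
oriented loop which contains one of them, or from which their common source can be
reached. -/
def HasRecDoubleEdge (A : RGraph) : Prop :=
  ∃ e₁ e₂ : A.E, e₁ ≠ e₂ ∧ A.s e₁ = A.s e₂ ∧ A.t e₁ = A.t e₂ ∧
    ((∃ (q : A.V) (l : List A.E),
        A.PathFrom q l ∧ l ≠ [] ∧ A.pathTarget q l = q ∧ (e₁ ∈ l ∨ e₂ ∈ l)) ∨
     (∃ (q : A.V) (l : List A.E),
        A.PathFrom q l ∧ l ≠ [] ∧ A.pathTarget q l = q ∧ A.Reach q (A.s e₁)))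

/-- A deterministic finite automaton over the alphabet `A`, with a partial transition
function, a single initial state, and all states accepting. -/
structure PDFA (A : Type) where
  Q : Type
  finQ : Finite Q
  neQ : Nonempty Q
  δ : Q → A → Option Q
  init : Q

namespace PDFA

variable {A : Type} (M : PDFA A)

/-- Running the automaton from state `q` on a word; `none` if it gets stuck. -/
def run : M.Q → List A → Option M.Q
  | q, [] => some q
  | q, a :: w => (M.δ q a).bind fun q' => run q' w

/-- The regular language accepted by `M`. -/
def Lang : Set (List A) := {w | (M.run M.init w).isSome}

lemma run_append (q : M.Q) (u w : List A) :
    M.run q (u ++ w) = (M.run q u).bind fun q' => M.run q' w := by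
  induction u generalizing q with
  | nil => simp [run]
  | cons a u ih =>
    simp only [List.cons_append, run]
    cases M.δ q a with
    | none => simp
    | some q' => simp [ih]

lemma isSome_of_append {q : M.Q} {u w : List A}
    (h : (M.run q (u ++ w)).isSome) : (M.run q u).isSome := by
  rw [run_append] at h
  cases hu : M.run q u with
  | none => rw [hu] at h; simp at h
  | some q' => simp

/-- The path language tree of `M`: the tree whose vertices are the words of the
language of `M`, with an edge from `w` to `w ++ [a]` whenever both belong to the
language. -/
def pathTree : RGraph where
  V := {w : List A // (M.run M.init w).isSome}
  E := {x : List A × A // (M.run M.init (x.1 ++ [x.2])).isSome}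
  s := fun x => ⟨x.1.1, M.isSome_of_append x.2⟩
  t := fun x => ⟨x.1.1 ++ [x.1.2], x.2⟩
  root := ⟨[], by simp [run]⟩

/-- The underlying rooted directed multigraph of the automaton `M`. -/
def underlying : RGraph where
  V := M.Q
  E := {x : M.Q × A // (M.δ x.1 x.2).isSome}
  s := fun x => x.1.1
  t := fun x => (M.δ x.1.1 x.1.2).get x.2
  root := M.init

/-- `M` is geometrically minimal: it has the minimal number of states among all DFAs
(over arbitrary finite nonempty alphabets) whose path language trees are isomorphic,
as unlabelled rooted trees, to the path language tree of `M`. -/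
def GeomMinimal : Prop :=
  ∀ (B : Type), Finite B → Nonempty B → ∀ N : PDFA B,
    RGraph.Iso M.pathTree N.pathTree → Nat.card M.Q ≤ Nat.card N.Q

/-- The state reached after reading the word `w` of the language. -/
def qstate (w : List A) (h : (M.run M.init w).isSome) : M.Q :=
  (M.run M.init w).get h

/-- The group of admissible permutations at the state `q`: permutations `τ` of the
alphabet fixing the letters outside `Σ(q)` and satisfying `δ(q, τ a) = δ(q, a)`. -/
def SymQ (q : M.Q) : Subgroup (Equiv.Perm A) where
  carrier := {τ | ∀ a, M.δ q (τ a) = M.δ q a ∧ (M.δ q a = none → τ a = a)}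
  one_mem' := fun _ => ⟨rfl, fun _ => rfl⟩
  mul_mem' := by
    intro τ₁ τ₂ h1 h2 a
    constructor
    · show M.δ q (τ₁ (τ₂ a)) = M.δ q a
      rw [(h1 (τ₂ a)).1, (h2 a).1]
    · intro hn
      show τ₁ (τ₂ a) = a
      rw [(h2 a).2 hn, (h1 a).2 hn]
  inv_mem' := by
    intro τ h a
    have h1 := (h (τ.symm a)).1
    rw [Equiv.apply_symm_apply] at h1
    constructor
    · show M.δ q (τ.symm a) = M.δ q a
      exact h1.symm
    · intro hn
      have h2 := (h (τ.symm a)).2 (h1.symm.trans hn)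
      rw [Equiv.apply_symm_apply] at h2
      show τ.symm a = a
      exact h2.symm

end PDFA

/-- Extending a portrait to a map on words (the first argument is the accumulated
prefix): the `i`-th letter of the image word is the image of the `i`-th letter under
the local injection at the prefix of length `i - 1`. -/
def portraitExtend {A : Type} (σ : List A → A → A) : List A → List A → List A
  | _, [] => []
  | pre, a :: w => σ pre a :: portraitExtend σ (pre ++ [a]) w

namespace S15

open PDFA

variable {A : Type} {M : PDFA A}

lemma run_single (q : M.Q) (a : A) : M.run q [a] = M.δ q a := by
  show (M.δ q a).bind (fun q' => M.run q' []) = M.δ q a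
  cases M.δ q a <;> rfl

lemma run_cons (q : M.Q) (a : A) (w : List A) :
    M.run q (a :: w) = (M.δ q a).bind (fun q' => M.run q' w) := rfl

lemma mem_lang_iff (w : List A) : w ∈ M.Lang ↔ (M.run M.init w).isSome := Iff.rfl

lemma run_init_append (v u : List A) (hv : (M.run M.init v).isSome) :
    M.run M.init (v ++ u) = M.run (M.qstate v hv) u := by
  rw [PDFA.run_append]
  conv_lhs => rw [← Option.some_get hv]
  rfl

lemma run_init_snoc (v : List A) (a : A) (hv : (M.run M.init v).isSome) :
    M.run M.init (v ++ [a]) = M.δ (M.qstate v hv) a := by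
  rw [run_init_append v [a] hv, run_single]

lemma adj_iff (v w : M.pathTree.V) :
    M.pathTree.Adj v w ↔ ∃ a : A, w.1 = v.1 ++ [a] := by
  constructor
  · rintro ⟨e, he1, he2⟩
    refine ⟨e.1.2, ?_⟩
    rw [← he2, ← he1]
    rfl
  · rintro ⟨a, ha⟩
    refine ⟨⟨(v.1, a), by rw [← ha]; exact w.2⟩, Subtype.ext rfl, Subtype.ext ha.symm⟩

lemma aut_adj {g : Equiv.Perm M.pathTree.V} (hg : g ∈ M.pathTree.autGroup)
    (v w : M.pathTree.V) : M.pathTree.Adj v w ↔ M.pathTree.Adj (g v) (g w) := hg.2 v w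

lemma aut_length {g : Equiv.Perm M.pathTree.V} (hg : g ∈ M.pathTree.autGroup) :
    ∀ (n : ℕ) (v : M.pathTree.V), v.1.length ≤ n → (g v).1.length = v.1.length := by
  intro n
  induction n with
  | zero =>
    intro v hv
    have hnil : v.1 = [] := List.length_eq_zero_iff.mp (Nat.le_zero.mp hv)
    have hroot : v = M.pathTree.root := Subtype.ext hnil
    rw [hroot, hg.1]
  | succ n ih =>
    intro v hv
    rcases eq_or_ne v.1 [] with hnil | hnil
    · have hroot : v = M.pathTree.root := Subtype.ext hnil
      rw [hroot, hg.1]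
    · have hsplit : v.1.dropLast ++ [v.1.getLast hnil] = v.1 :=
        List.dropLast_append_getLast hnil
      have hmem : (M.run M.init v.1.dropLast).isSome := by
        apply M.isSome_of_append (w := [v.1.getLast hnil])
        rw [hsplit]; exact v.2
      set u : M.pathTree.V := ⟨v.1.dropLast, hmem⟩ with hu
      have hadj : M.pathTree.Adj u v := (adj_iff u v).mpr ⟨v.1.getLast hnil, hsplit.symm⟩
      have hadj' := (aut_adj hg u v).mp hadj
      obtain ⟨b, hb⟩ := (adj_iff _ _).mp hadj'
      have hpos : 0 < v.1.length := List.length_pos_iff.mpr hnil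
      have hdl : u.1.length = v.1.length - 1 := List.length_dropLast
      have hul : u.1.length ≤ n := by omega
      have ihu := ih u hul
      have hblen := congrArg List.length hb
      simp only [List.length_append, List.length_singleton] at hblen
      omega

end S15
namespace S15

variable {A : Type} {M : PDFA A}

lemma pe_snoc (σ : List A → A → A) : ∀ (w pre : List A) (a : A),
    portraitExtend σ pre (w ++ [a]) = portraitExtend σ pre w ++ [σ (pre ++ w) a] := by
  intro w
  induction w with
  | nil => intro pre a; simp [portraitExtend]
  | cons b w ih =>
    intro pre a
    have hap : w.append [a] = w ++ [a] := rfl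
    simp only [List.cons_append, portraitExtend, hap, ih, List.append_assoc,
      List.singleton_append, List.nil_append]

lemma pe_length (σ : List A → A → A) : ∀ (w pre : List A),
    (portraitExtend σ pre w).length = w.length := by
  intro w
  induction w with
  | nil => intro pre; rfl
  | cons b w ih => intro pre; simp [portraitExtend, ih]

section EasyDir

variable (σ : List A → A → A)

/-- Admissibility of the portrait. -/
def Adm (M : PDFA A) (σ : List A → A → A) : Prop :=
  ∀ v : M.pathTree.V,
    Set.BijOn (σ v.1) {a | (M.δ (M.qstate v.1 v.2) a).isSome}
      {a | (M.δ (M.qstate v.1 v.2) a).isSome} ∧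
    ∀ a : A, v.1 ++ [a] ∈ M.Lang →
      M.δ (M.qstate v.1 v.2) (σ v.1 a) = M.δ (M.qstate v.1 v.2) a

lemma qstate_congr {v u : List A} (hv : (M.run M.init v).isSome)
    (hu : (M.run M.init u).isSome) (h : M.run M.init v = M.run M.init u) :
    M.qstate v hv = M.qstate u hu := by
  apply Option.some_injective
  show some ((M.run M.init v).get hv) = some ((M.run M.init u).get hu)
  rw [Option.some_get, Option.some_get, h]

lemma run_pe (hadm : Adm M σ) : ∀ (w : List A), (M.run M.init w).isSome →
    M.run M.init (portraitExtend σ [] w) = M.run M.init w := by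
  intro w
  induction w using List.reverseRecOn with
  | nil => intro _; rfl
  | append_singleton w a ih =>
    intro hw
    have hw0 : (M.run M.init w).isSome := M.isSome_of_append hw
    rw [pe_snoc, List.nil_append]
    have hEw : (M.run M.init (portraitExtend σ [] w)).isSome := by
      rw [ih hw0]; exact hw0
    rw [run_init_snoc _ _ hEw, run_init_snoc _ _ hw0]
    have hq : M.qstate (portraitExtend σ [] w) hEw = M.qstate w hw0 :=
      qstate_congr hEw hw0 (ih hw0)
    rw [hq]
    exact (hadm ⟨w, hw0⟩).2 a hw

lemma pe_inj (hσ : ∀ v : M.pathTree.V, Set.InjOn (σ v.1) {a | v.1 ++ [a] ∈ M.Lang}) :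
    ∀ (n : ℕ) (w w' : List A), (M.run M.init w).isSome → (M.run M.init w').isSome →
      w.length ≤ n → portraitExtend σ [] w = portraitExtend σ [] w' → w = w' := by
  intro n
  induction n with
  | zero =>
    intro w w' _ _ hlen heq
    have h1 : w = [] := List.length_eq_zero_iff.mp (Nat.le_zero.mp hlen)
    have h2 : w'.length = 0 := by
      have := congrArg List.length heq
      rw [pe_length, pe_length] at this
      omega
    rw [h1, List.length_eq_zero_iff.mp h2]
  | succ n ih =>
    intro w w' hw hw' hlen heq
    have hll : w.length = w'.length := by
      have := congrArg List.length heq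
      rwa [pe_length, pe_length] at this
    rcases eq_or_ne w [] with hnil | hnil
    · subst hnil
      have h0 : w'.length = 0 := by simpa using hll.symm
      rw [List.length_eq_zero_iff.mp h0]
    · have hnil' : w' ≠ [] := by
        intro h
        apply hnil
        subst h
        have h0 : w.length = 0 := by simpa using hll
        exact List.length_eq_zero_iff.mp h0
      obtain ⟨u, a, rfl⟩ : ∃ u a, w = u ++ [a] :=
        ⟨w.dropLast, w.getLast hnil, (List.dropLast_append_getLast hnil).symm⟩
      obtain ⟨u', a', rfl⟩ : ∃ u a, w' = u ++ [a] :=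
        ⟨w'.dropLast, w'.getLast hnil', (List.dropLast_append_getLast hnil').symm⟩
      rw [pe_snoc, pe_snoc, List.nil_append, List.nil_append] at heq
      have hlu : u.length = u'.length := by
        simp only [List.length_append, List.length_singleton] at hll; omega
      have hinj := List.append_inj heq (by rw [pe_length, pe_length]; exact hlu)
      have hu : (M.run M.init u).isSome := M.isSome_of_append hw
      have hu' : (M.run M.init u').isSome := M.isSome_of_append hw'
      have huu : u = u' := by
        apply ih u u' hu hu' ?_ hinj.1
        simp only [List.length_append, List.length_singleton] at hlen; omega
      subst huu
      have haa : a = a' := by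
        have h2 := hinj.2
        simp only [List.cons.injEq, and_true] at h2
        exact hσ ⟨u, hu⟩ hw hw' h2
      rw [haa]

lemma pe_surj (hadm : Adm M σ) :
    ∀ (n : ℕ) (w : List A), (M.run M.init w).isSome → w.length ≤ n →
      ∃ (v : List A) (hv : (M.run M.init v).isSome), portraitExtend σ [] v = w := by
  intro n
  induction n with
  | zero =>
    intro w _ hlen
    have h1 : w = [] := List.length_eq_zero_iff.mp (Nat.le_zero.mp hlen)
    exact ⟨[], by simp [PDFA.run], by rw [h1]; rfl⟩
  | succ n ih =>
    intro w hw hlen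
    rcases eq_or_ne w [] with hnil | hnil
    · exact ⟨[], by simp [PDFA.run], by rw [hnil]; rfl⟩
    · obtain ⟨u, b, rfl⟩ : ∃ u b, w = u ++ [b] :=
        ⟨w.dropLast, w.getLast hnil, (List.dropLast_append_getLast hnil).symm⟩
      have hu : (M.run M.init u).isSome := M.isSome_of_append hw
      obtain ⟨v, hv, hEv⟩ := ih u hu (by
        simp only [List.length_append, List.length_singleton] at hlen; omega)
      have hrv : M.run M.init v = M.run M.init u := by
        rw [← run_pe σ hadm v hv, hEv]
      have hqv : M.qstate v hv = M.qstate u hu := qstate_congr hv hu hrv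
      have hb : b ∈ {x | (M.δ (M.qstate v hv) x).isSome} := by
        rw [hqv]
        show (M.δ (M.qstate u hu) b).isSome
        rw [← run_init_snoc u b hu]
        exact hw
      obtain ⟨a, ha, hab⟩ := (hadm ⟨v, hv⟩).1.2.2 hb
      have hva : (M.run M.init (v ++ [a])).isSome := by
        rw [run_init_snoc v a hv]; exact ha
      refine ⟨v ++ [a], hva, ?_⟩
      rw [pe_snoc, List.nil_append, hEv, hab]

lemma easy_dir (hσ : ∀ v : M.pathTree.V, Set.InjOn (σ v.1) {a | v.1 ++ [a] ∈ M.Lang})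
    (hadm : Adm M σ) :
    ∃ g ∈ M.pathTree.autGroup,
      ∀ (w v : M.pathTree.V) (a : A), w.1 = v.1 ++ [a] →
        (g w).1 = (g v).1 ++ [σ v.1 a] := by
  have hmem : ∀ x : M.pathTree.V, (M.run M.init (portraitExtend σ [] x.1)).isSome := by
    intro x; rw [run_pe σ hadm x.1 x.2]; exact x.2
  set f : M.pathTree.V → M.pathTree.V :=
    fun x => ⟨portraitExtend σ [] x.1, hmem x⟩ with hf
  have hbij : Function.Bijective f := by
    constructor
    · intro x y hxy
      exact Subtype.ext (pe_inj σ hσ x.1.length x.1 y.1 x.2 y.2 le_rfl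
        (congrArg Subtype.val hxy))
    · intro y
      obtain ⟨v, hv, hEv⟩ := pe_surj σ hadm y.1.length y.1 y.2 le_rfl
      exact ⟨⟨v, hv⟩, Subtype.ext hEv⟩
  refine ⟨Equiv.ofBijective f hbij, ⟨?_, ?_⟩, ?_⟩
  · exact Subtype.ext rfl
  · intro v w
    rw [adj_iff, adj_iff]
    constructor
    · rintro ⟨a, ha⟩
      refine ⟨σ v.1 a, ?_⟩
      show portraitExtend σ [] w.1 = portraitExtend σ [] v.1 ++ [σ v.1 a]
      rw [ha, pe_snoc, List.nil_append]
    · rintro ⟨b, hb⟩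
      replace hb : portraitExtend σ [] w.1 = portraitExtend σ [] v.1 ++ [b] := hb
      have hlw : w.1.length = v.1.length + 1 := by
        have := congrArg List.length hb
        rw [pe_length] at this
        simp only [List.length_append, List.length_singleton, pe_length] at this
        omega
      have hnil : w.1 ≠ [] := by
        intro h; rw [h] at hlw; simp at hlw
      obtain ⟨u, a, hw⟩ : ∃ u a, w.1 = u ++ [a] :=
        ⟨w.1.dropLast, w.1.getLast hnil, (List.dropLast_append_getLast hnil).symm⟩
      have hu : (M.run M.init u).isSome := M.isSome_of_append (by rw [← hw]; exact w.2)
      rw [hw, pe_snoc, List.nil_append] at hb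
      have hinj := List.append_inj hb (by
        rw [pe_length, pe_length]
        rw [hw] at hlw
        simp only [List.length_append, List.length_singleton] at hlw
        omega)
      have huv : u = v.1 := pe_inj σ hσ u.length u v.1 hu v.2 le_rfl hinj.1
      exact ⟨a, by rw [hw, huv]⟩
  · intro w v a h
    show portraitExtend σ [] w.1 = portraitExtend σ [] v.1 ++ [σ v.1 a]
    rw [h, pe_snoc, List.nil_append]

end EasyDir

end S15
namespace S15

variable {A : Type} {M : PDFA A}

/-- The state reached at a vertex of the path tree. -/
noncomputable abbrev st (v : M.pathTree.V) : M.Q := M.qstate v.1 v.2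

lemma run_st (v : M.pathTree.V) (u : List A) :
    M.run M.init (v.1 ++ u) = M.run (st v) u := run_init_append v.1 u v.2

lemma cone_shape {g : Equiv.Perm M.pathTree.V} (hg : g ∈ M.pathTree.autGroup)
    (w2 : M.pathTree.V) :
    ∀ (u : List A) (hu : (M.run M.init (w2.1 ++ u)).isSome),
      ∃ u', (g ⟨w2.1 ++ u, hu⟩).1 = (g w2).1 ++ u' := by
  intro u
  induction u using List.reverseRecOn with
  | nil =>
    intro hu
    have h0 : (⟨w2.1 ++ [], hu⟩ : M.pathTree.V) = w2 := Subtype.ext (by simp)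
    rw [h0]
    exact ⟨[], by simp⟩
  | append_singleton u a ih =>
    intro hu
    have hu0 : (M.run M.init (w2.1 ++ u)).isSome := by
      apply M.isSome_of_append (w := [a])
      rw [List.append_assoc]
      exact hu
    obtain ⟨u', hu'⟩ := ih hu0
    have hadj : M.pathTree.Adj ⟨w2.1 ++ u, hu0⟩ ⟨w2.1 ++ (u ++ [a]), hu⟩ :=
      (adj_iff _ _).mpr ⟨a, by rw [List.append_assoc]⟩
    obtain ⟨b, hb⟩ := (adj_iff _ _).mp ((aut_adj hg _ _).mp hadj)
    exact ⟨u' ++ [b], by rw [hb, hu', List.append_assoc]⟩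

/-- Translation of cone words induced by an automorphism of the path tree. -/
noncomputable def coneMap (M : PDFA A) (g : Equiv.Perm M.pathTree.V)
    (w2 : M.pathTree.V) : List A → List A :=
  fun u => if hu : (M.run M.init (w2.1 ++ u)).isSome
    then ((g ⟨w2.1 ++ u, hu⟩).1).drop (g w2).1.length else u

lemma coneMap_spec {g : Equiv.Perm M.pathTree.V} (hg : g ∈ M.pathTree.autGroup)
    (w2 : M.pathTree.V) (u : List A) (hu : (M.run M.init (w2.1 ++ u)).isSome) :
    (g w2).1 ++ coneMap M g w2 u = (g ⟨w2.1 ++ u, hu⟩).1 := by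
  obtain ⟨u', h'⟩ := cone_shape hg w2 u hu
  rw [coneMap, dif_pos hu, h', List.drop_left]

lemma coneMap_run {g : Equiv.Perm M.pathTree.V} (hg : g ∈ M.pathTree.autGroup)
    (w2 : M.pathTree.V) (u : List A) (hu : (M.run (st w2) u).isSome) :
    (M.run (st (g w2)) (coneMap M g w2 u)).isSome := by
  have hu' : (M.run M.init (w2.1 ++ u)).isSome := by rw [run_st]; exact hu
  rw [← run_st (g w2), coneMap_spec hg w2 u hu']
  exact (g ⟨w2.1 ++ u, hu'⟩).2

lemma coneMap_length {g : Equiv.Perm M.pathTree.V} (hg : g ∈ M.pathTree.autGroup)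
    (w2 : M.pathTree.V) (u : List A) (hu : (M.run (st w2) u).isSome) :
    (coneMap M g w2 u).length = u.length := by
  have hu' : (M.run M.init (w2.1 ++ u)).isSome := by rw [run_st]; exact hu
  have h := congrArg List.length (coneMap_spec hg w2 u hu')
  have h1 : ((g ⟨w2.1 ++ u, hu'⟩).1).length = w2.1.length + u.length := by
    rw [aut_length hg (w2.1 ++ u).length ⟨w2.1 ++ u, hu'⟩ le_rfl]
    simp
  have h2 : ((g w2).1).length = w2.1.length := aut_length hg w2.1.length w2 le_rfl
  simp only [List.length_append] at h
  omega

lemma coneMap_snoc {g : Equiv.Perm M.pathTree.V} (hg : g ∈ M.pathTree.autGroup)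
    (w2 : M.pathTree.V) (u : List A) (a : A) (hu : (M.run (st w2) (u ++ [a])).isSome) :
    ∃ b, coneMap M g w2 (u ++ [a]) = coneMap M g w2 u ++ [b] := by
  have hu0 : (M.run (st w2) u).isSome := M.isSome_of_append hu
  have hu' : (M.run M.init (w2.1 ++ (u ++ [a]))).isSome := by rw [run_st]; exact hu
  have hu0' : (M.run M.init (w2.1 ++ u)).isSome := by rw [run_st]; exact hu0
  have hadj : M.pathTree.Adj ⟨w2.1 ++ u, hu0'⟩ ⟨w2.1 ++ (u ++ [a]), hu'⟩ :=
    (adj_iff _ _).mpr ⟨a, by rw [List.append_assoc]⟩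
  obtain ⟨b, hb⟩ := (adj_iff _ _).mp ((aut_adj hg _ _).mp hadj)
  refine ⟨b, ?_⟩
  apply List.append_cancel_left (as := (g w2).1)
  rw [coneMap_spec hg w2 (u ++ [a]) hu', hb, ← List.append_assoc,
    coneMap_spec hg w2 u hu0']

lemma coneMap_inv {g : Equiv.Perm M.pathTree.V} (hg : g ∈ M.pathTree.autGroup)
    (w2 : M.pathTree.V) (u : List A) (hu : (M.run (st w2) u).isSome) :
    coneMap M g⁻¹ (g w2) (coneMap M g w2 u) = u := by
  have hu' : (M.run M.init (w2.1 ++ u)).isSome := by rw [run_st]; exact hu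
  have h1 := coneMap_spec hg w2 u hu'
  have hX : (M.run M.init ((g w2).1 ++ coneMap M g w2 u)).isSome := by
    rw [h1]; exact (g ⟨w2.1 ++ u, hu'⟩).2
  have h2 := coneMap_spec (inv_mem hg) (g w2) (coneMap M g w2 u) hX
  have h3 : (⟨(g w2).1 ++ coneMap M g w2 u, hX⟩ : M.pathTree.V) = g ⟨w2.1 ++ u, hu'⟩ :=
    Subtype.ext h1
  rw [h3, (Equiv.Perm.inv_eq_iff_eq.mpr rfl), (Equiv.Perm.inv_eq_iff_eq.mpr (rfl : g ⟨w2.1 ++ u, hu'⟩ = g ⟨w2.1 ++ u, hu'⟩))] at h2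
  exact List.append_cancel_left h2

end S15
namespace S15

variable {A : Type}

section Merge

variable (M : PDFA A) (r1 r2 : M.Q)

open Classical in
/-- The automaton obtained by deleting the state `r2`, redirecting transitions into
`r2` towards `r1`. -/
noncomputable abbrev merged (hr : r1 ≠ r2) (hinit : M.init ≠ r2) : PDFA A where
  Q := {q : M.Q // q ≠ r2}
  finQ := by have := M.finQ; exact Subtype.finite
  neQ := ⟨⟨r1, hr⟩⟩
  δ := fun q a => (M.δ q.1 a).map (fun q' => if h : q' = r2 then ⟨r1, hr⟩ else ⟨q', h⟩)
  init := ⟨M.init, hinit⟩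

open Classical in
/-- Translation of words of `M` into words of the merged automaton. -/
noncomputable def phi (c : List A → List A) : ℕ → M.Q → List A → List A
  | 0, _, w => w
  | _ + 1, _, [] => []
  | n + 1, q, a :: w =>
    match M.δ q a with
    | some q' => if q' = r2 then a :: phi c n r1 (c w) else a :: phi c n q' w
    | none => a :: w

open Classical in
/-- Translation of words of the merged automaton back into words of `M`. -/
noncomputable def psi (c' : List A → List A) : ℕ → M.Q → List A → List A
  | 0, _, w => w
  | _ + 1, _, [] => []
  | n + 1, q, a :: w =>
    match M.δ q a with
    | some q' => if q' = r2 then a :: c' (psi c' n r1 w) else a :: psi c' n q' w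
    | none => a :: w

variable {M r1 r2}
variable {c c' : List A → List A} {hr : r1 ≠ r2} {hinit : M.init ≠ r2}

lemma phi_nil (n : ℕ) (q : M.Q) : phi M r1 r2 c n q [] = [] := by cases n <;> rfl

lemma psi_nil (n : ℕ) (q : M.Q) : psi M r1 r2 c' n q [] = [] := by cases n <;> rfl

lemma phi_cons_r2 {q : M.Q} {a : A} (n : ℕ) (w : List A) (hδ : M.δ q a = some r2) :
    phi M r1 r2 c (n + 1) q (a :: w) = a :: phi M r1 r2 c n r1 (c w) := by
  simp [phi, hδ]

lemma phi_cons_ne {q q' : M.Q} {a : A} (n : ℕ) (w : List A) (hδ : M.δ q a = some q')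
    (h : q' ≠ r2) : phi M r1 r2 c (n + 1) q (a :: w) = a :: phi M r1 r2 c n q' w := by
  simp [phi, hδ, h]

lemma psi_cons_r2 {q : M.Q} {a : A} (n : ℕ) (w : List A) (hδ : M.δ q a = some r2) :
    psi M r1 r2 c' (n + 1) q (a :: w) = a :: c' (psi M r1 r2 c' n r1 w) := by
  simp [psi, hδ]

lemma psi_cons_ne {q q' : M.Q} {a : A} (n : ℕ) (w : List A) (hδ : M.δ q a = some q')
    (h : q' ≠ r2) : psi M r1 r2 c' (n + 1) q (a :: w) = a :: psi M r1 r2 c' n q' w := by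
  simp [psi, hδ, h]

lemma merged_δ_r2 {q : M.Q} {a : A} (hq : q ≠ r2) (hδ : M.δ q a = some r2) :
    (merged M r1 r2 hr hinit).δ ⟨q, hq⟩ a = some ⟨r1, hr⟩ := by
  simp [merged, hδ]

lemma merged_δ_ne {q q' : M.Q} {a : A} (hq : q ≠ r2) (hδ : M.δ q a = some q')
    (h : q' ≠ r2) : (merged M r1 r2 hr hinit).δ ⟨q, hq⟩ a = some ⟨q', h⟩ := by
  simp [merged, hδ, h]

lemma merged_δ_none {q : M.Q} {a : A} (hq : q ≠ r2) (hδ : M.δ q a = none) :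
    (merged M r1 r2 hr hinit).δ ⟨q, hq⟩ a = none := by
  simp [merged, hδ]

lemma run_cons_some {N : PDFA A} {q : N.Q} {a : A} {w : List A}
    (h : (N.run q (a :: w)).isSome) :
    ∃ q', N.δ q a = some q' ∧ (N.run q' w).isSome := by
  rw [run_cons] at h
  cases hδ : N.δ q a with
  | none => rw [hδ] at h; simp at h
  | some q' =>
    rw [hδ, Option.bind_some] at h
    exact ⟨q', rfl, h⟩

section Hyp

variable (H1 : ∀ u, (M.run r2 u).isSome → (M.run r1 (c u)).isSome)
variable (H2 : ∀ u, (M.run r2 u).isSome → (c u).length = u.length)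
variable (H3 : ∀ u a, (M.run r2 (u ++ [a])).isSome → ∃ b, c (u ++ [a]) = c u ++ [b])
variable (H1' : ∀ u, (M.run r1 u).isSome → (M.run r2 (c' u)).isSome)
variable (H2' : ∀ u, (M.run r1 u).isSome → (c' u).length = u.length)
variable (H4 : ∀ u, (M.run r2 u).isSome → c' (c u) = u)
variable (H4' : ∀ u, (M.run r1 u).isSome → c (c' u) = u)

include H1 H2 in
lemma phi_length : ∀ (n : ℕ) (q : M.Q) (w : List A), (M.run q w).isSome →
    w.length ≤ n → (phi M r1 r2 c n q w).length = w.length := by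
  intro n
  induction n with
  | zero => intro q w _ _; rfl
  | succ n ih =>
    intro q w hw hn
    cases w with
    | nil => rw [phi_nil]
    | cons a w =>
      obtain ⟨q', hδ, hw'⟩ := run_cons_some hw
      have hn' : w.length ≤ n := by simp at hn; omega
      by_cases h2 : q' = r2
      · subst h2
        rw [phi_cons_r2 n w hδ]
        have hlen := H2 w hw'
        simp [ih r1 (c w) (H1 w hw') (by omega), hlen]
      · rw [phi_cons_ne n w hδ h2]
        simp [ih q' w hw' hn']

include H1 H2 in
lemma phi_fuel : ∀ (n : ℕ) (q : M.Q) (w : List A), (M.run q w).isSome →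
    w.length ≤ n → phi M r1 r2 c (n + 1) q w = phi M r1 r2 c n q w := by
  intro n
  induction n with
  | zero =>
    intro q w _ hn
    rw [List.length_eq_zero_iff.mp (Nat.le_zero.mp hn), phi_nil]
    rfl
  | succ n ih =>
    intro q w hw hn
    cases w with
    | nil => rw [phi_nil, phi_nil]
    | cons a w =>
      obtain ⟨q', hδ, hw'⟩ := run_cons_some hw
      have hn' : w.length ≤ n := by simp at hn; omega
      by_cases h2 : q' = r2
      · subst h2
        rw [phi_cons_r2 (n + 1) w hδ, phi_cons_r2 n w hδ,
          ih r1 (c w) (H1 w hw') (by rw [H2 w hw']; omega)]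
      · rw [phi_cons_ne (n + 1) w hδ h2, phi_cons_ne n w hδ h2, ih q' w hw' hn']

include H1 H2 in
lemma phi_runN : ∀ (n : ℕ) (q : M.Q) (hq : q ≠ r2) (w : List A), (M.run q w).isSome →
    w.length ≤ n →
    (((merged M r1 r2 hr hinit).run ⟨q, hq⟩ (phi M r1 r2 c n q w))).isSome := by
  intro n
  induction n with
  | zero =>
    intro q hq w _ hn
    rw [List.length_eq_zero_iff.mp (Nat.le_zero.mp hn)]
    simp [PDFA.run, phi]
  | succ n ih =>
    intro q hq w hw hn
    cases w with
    | nil => rw [phi_nil]; simp [PDFA.run]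
    | cons a w =>
      obtain ⟨q', hδ, hw'⟩ := run_cons_some hw
      have hn' : w.length ≤ n := by simp at hn; omega
      by_cases h2 : q' = r2
      · subst h2
        rw [phi_cons_r2 n w hδ, run_cons, merged_δ_r2 hq hδ, Option.bind_some]
        exact ih r1 hr (c w) (H1 w hw') (by rw [H2 w hw']; omega)
      · rw [phi_cons_ne n w hδ h2, run_cons, merged_δ_ne hq hδ h2, Option.bind_some]
        exact ih q' h2 w hw' hn'

include H1' in
lemma psi_runM : ∀ (n : ℕ) (q : M.Q) (hq : q ≠ r2) (w : List A),
    ((merged M r1 r2 hr hinit).run ⟨q, hq⟩ w).isSome → w.length ≤ n →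
    (M.run q (psi M r1 r2 c' n q w)).isSome := by
  intro n
  induction n with
  | zero =>
    intro q hq w _ hn
    rw [List.length_eq_zero_iff.mp (Nat.le_zero.mp hn)]
    simp [PDFA.run, psi]
  | succ n ih =>
    intro q hq w hw hn
    cases w with
    | nil => rw [psi_nil]; simp [PDFA.run]
    | cons a w =>
      have hn' : w.length ≤ n := by simp at hn; omega
      cases hδ : M.δ q a with
      | none =>
        rw [run_cons, merged_δ_none hq hδ] at hw
        simp at hw
      | some q' =>
        by_cases h2 : q' = r2
        · subst h2
          rw [run_cons, merged_δ_r2 hq hδ, Option.bind_some] at hw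
          rw [psi_cons_r2 n w hδ, run_cons, hδ, Option.bind_some]
          exact H1' _ (ih r1 hr w hw hn')
        · rw [run_cons, merged_δ_ne hq hδ h2, Option.bind_some] at hw
          rw [psi_cons_ne n w hδ h2, run_cons, hδ, Option.bind_some]
          exact ih q' h2 w hw hn'

include H1' H2' in
lemma psi_length : ∀ (n : ℕ) (q : M.Q) (hq : q ≠ r2) (w : List A),
    ((merged M r1 r2 hr hinit).run ⟨q, hq⟩ w).isSome → w.length ≤ n →
    (psi M r1 r2 c' n q w).length = w.length := by
  intro n
  induction n with
  | zero => intro q hq w _ _; rfl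
  | succ n ih =>
    intro q hq w hw hn
    cases w with
    | nil => rw [psi_nil]
    | cons a w =>
      have hn' : w.length ≤ n := by simp at hn; omega
      cases hδ : M.δ q a with
      | none =>
        rw [run_cons, merged_δ_none hq hδ] at hw
        simp at hw
      | some q' =>
        by_cases h2 : q' = r2
        · subst h2
          rw [run_cons, merged_δ_r2 hq hδ, Option.bind_some] at hw
          rw [psi_cons_r2 n w hδ]
          have hrun := psi_runM H1' n r1 hr w hw hn'
          simp [H2' _ hrun, ih r1 hr w hw hn']
        · rw [run_cons, merged_δ_ne hq hδ h2, Option.bind_some] at hw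
          rw [psi_cons_ne n w hδ h2]
          simp [ih q' h2 w hw hn']

include H1 H2 H4 in
lemma psi_phi : ∀ (n : ℕ) (q : M.Q) (w : List A), (M.run q w).isSome →
    w.length ≤ n → psi M r1 r2 c' n q (phi M r1 r2 c n q w) = w := by
  intro n
  induction n with
  | zero => intro q w _ _; rfl
  | succ n ih =>
    intro q w hw hn
    cases w with
    | nil => rw [phi_nil, psi_nil]
    | cons a w =>
      obtain ⟨q', hδ, hw'⟩ := run_cons_some hw
      have hn' : w.length ≤ n := by simp at hn; omega
      by_cases h2 : q' = r2
      · rw [h2] at hδ hw'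
        rw [phi_cons_r2 n w hδ, psi_cons_r2 n (phi M r1 r2 c n r1 (c w)) hδ,
          ih r1 (c w) (H1 w hw') (by rw [H2 w hw']; omega), H4 w hw']
      · rw [phi_cons_ne n w hδ h2, psi_cons_ne n (phi M r1 r2 c n q' w) hδ h2,
          ih q' w hw' hn']

include H1' H4' in
lemma phi_psi : ∀ (n : ℕ) (q : M.Q) (hq : q ≠ r2) (w : List A),
    ((merged M r1 r2 hr hinit).run ⟨q, hq⟩ w).isSome → w.length ≤ n →
    phi M r1 r2 c n q (psi M r1 r2 c' n q w) = w := by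
  intro n
  induction n with
  | zero => intro q hq w _ _; rfl
  | succ n ih =>
    intro q hq w hw hn
    cases w with
    | nil => rw [psi_nil, phi_nil]
    | cons a w =>
      have hn' : w.length ≤ n := by simp at hn; omega
      cases hδ : M.δ q a with
      | none =>
        rw [run_cons, merged_δ_none hq hδ] at hw
        simp at hw
      | some q' =>
        by_cases h2 : q' = r2
        · rw [h2] at hδ
          rw [run_cons, merged_δ_r2 hq hδ, Option.bind_some] at hw
          rw [psi_cons_r2 n w hδ,
            phi_cons_r2 n (c' (psi M r1 r2 c' n r1 w)) hδ,
            H4' _ (psi_runM H1' n r1 hr w hw hn'), ih r1 hr w hw hn']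
        · rw [run_cons, merged_δ_ne hq hδ h2, Option.bind_some] at hw
          rw [psi_cons_ne n w hδ h2, phi_cons_ne n (psi M r1 r2 c' n q' w) hδ h2,
            ih q' h2 w hw hn']

include H1 H2 H3 in
lemma phi_snoc : ∀ (n : ℕ) (q : M.Q) (w : List A) (a : A),
    (M.run q (w ++ [a])).isSome → w.length + 1 ≤ n →
    ∃ b, phi M r1 r2 c n q (w ++ [a]) = phi M r1 r2 c n q w ++ [b] := by
  intro n
  induction n with
  | zero => intro q w a _ hn; omega
  | succ n ih =>
    intro q w a hw hn
    cases w with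
    | nil =>
      simp only [List.nil_append]
      obtain ⟨q', hδ, _⟩ := run_cons_some hw
      have hc0 : c [] = [] := by
        have h0 : (c []).length = 0 := by
          rw [H2 [] (by simp [PDFA.run])]
          rfl
        exact List.length_eq_zero_iff.mp h0
      by_cases h2 : q' = r2
      · rw [h2] at hδ
        rw [phi_cons_r2 n [] hδ, hc0, phi_nil, phi_nil]
        exact ⟨a, rfl⟩
      · rw [phi_cons_ne n [] hδ h2, phi_nil, phi_nil]
        exact ⟨a, rfl⟩
    | cons a' w' =>
      rw [List.cons_append] at hw ⊢
      obtain ⟨q', hδ, hw'⟩ := run_cons_some hw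
      have hn' : w'.length + 1 ≤ n := by simp at hn; omega
      by_cases h2 : q' = r2
      · rw [h2] at hδ hw'
        obtain ⟨b', hb'⟩ := H3 w' a hw'
        have hw'0 : (M.run r2 w').isSome := M.isSome_of_append hw'
        have hrun : (M.run r1 (c w' ++ [b'])).isSome := by
          rw [← hb']
          exact H1 _ hw'
        obtain ⟨b, hb⟩ := ih r1 (c w') b' hrun (by rw [H2 w' hw'0]; omega)
        refine ⟨b, ?_⟩
        rw [phi_cons_r2 n (w' ++ [a]) hδ, hb', hb, phi_cons_r2 n w' hδ]
        rfl
      · obtain ⟨b, hb⟩ := ih q' w' a hw' hn'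
        refine ⟨b, ?_⟩
        rw [phi_cons_ne n (w' ++ [a]) hδ h2, hb, phi_cons_ne n w' hδ h2]
        rfl

end Hyp

end Merge

end S15
namespace S15

variable {A : Type}

lemma card_contra (hfin : Finite A) (hne : Nonempty A) {M : PDFA A}
    (hM : M.GeomMinimal) {g : Equiv.Perm M.pathTree.V} (hg : g ∈ M.pathTree.autGroup)
    (w2 : M.pathTree.V) (hrr : st (g w2) ≠ st w2) (hini : M.init ≠ st w2) : False := by
  classical
  have hsymm : st (g⁻¹ (g w2)) = st w2 := by rw [(Equiv.Perm.inv_eq_iff_eq.mpr rfl)]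
  set r1 : M.Q := st (g w2) with hr1
  set r2 : M.Q := st w2 with hr2
  set c : List A → List A := coneMap M g w2 with hc
  set c' : List A → List A := coneMap M g⁻¹ (g w2) with hc'
  have hr : r1 ≠ r2 := hrr
  have H1 : ∀ u, (M.run r2 u).isSome → (M.run r1 (c u)).isSome :=
    fun u hu => coneMap_run hg w2 u hu
  have H2 : ∀ u, (M.run r2 u).isSome → (c u).length = u.length :=
    fun u hu => coneMap_length hg w2 u hu
  have H3 : ∀ u a, (M.run r2 (u ++ [a])).isSome → ∃ b, c (u ++ [a]) = c u ++ [b] :=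
    fun u a hu => coneMap_snoc hg w2 u a hu
  have H1' : ∀ u, (M.run r1 u).isSome → (M.run r2 (c' u)).isSome := by
    intro u hu
    have h := coneMap_run (inv_mem hg) (g w2) u hu
    rwa [hsymm] at h
  have H2' : ∀ u, (M.run r1 u).isSome → (c' u).length = u.length :=
    fun u hu => coneMap_length (inv_mem hg) (g w2) u hu
  have H4 : ∀ u, (M.run r2 u).isSome → c' (c u) = u :=
    fun u hu => coneMap_inv hg w2 u hu
  have H4' : ∀ u, (M.run r1 u).isSome → c (c' u) = u := by
    intro u hu
    have h := coneMap_inv (inv_mem hg) (g w2) u hu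
    rwa [inv_inv, (Equiv.Perm.inv_eq_iff_eq.mpr rfl)] at h
  set N : PDFA A := merged M r1 r2 hr hini with hN
  -- the translated word maps
  set PHI : List A → List A := fun w => phi M r1 r2 c w.length M.init w with hPHI
  set PSI : List A → List A := fun w => psi M r1 r2 c' w.length M.init w with hPSI
  have hNinit : N.init = ⟨M.init, hini⟩ := rfl
  have hΦmem : ∀ w, (M.run M.init w).isSome → (N.run N.init (PHI w)).isSome := by
    intro w hw
    exact phi_runN H1 H2 w.length M.init hini w hw le_rfl
  have hΦlen : ∀ w, (M.run M.init w).isSome → (PHI w).length = w.length := by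
    intro w hw
    exact phi_length H1 H2 w.length M.init w hw le_rfl
  have hΨmem : ∀ w, (N.run N.init w).isSome → (M.run M.init (PSI w)).isSome := by
    intro w hw
    exact psi_runM H1' w.length M.init hini w hw le_rfl
  have hΨlen : ∀ w, (N.run N.init w).isSome → (PSI w).length = w.length := by
    intro w hw
    exact psi_length H1' H2' w.length M.init hini w hw le_rfl
  have hΨΦ : ∀ w, (M.run M.init w).isSome → PSI (PHI w) = w := by
    intro w hw
    show psi M r1 r2 c' (PHI w).length M.init (PHI w) = w
    rw [hΦlen w hw]
    exact psi_phi H1 H2 H4 w.length M.init w hw le_rfl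
  have hΦΨ : ∀ w, (N.run N.init w).isSome → PHI (PSI w) = w := by
    intro w hw
    show phi M r1 r2 c (PSI w).length M.init (PSI w) = w
    rw [hΨlen w hw]
    exact phi_psi H1' H4' w.length M.init hini w hw le_rfl
  have hsnoc : ∀ w a, (M.run M.init (w ++ [a])).isSome →
      ∃ b, PHI (w ++ [a]) = PHI w ++ [b] := by
    intro w a hw
    have hw0 : (M.run M.init w).isSome := M.isSome_of_append hw
    obtain ⟨b, hb⟩ := phi_snoc H1 H2 H3 (w.length + 1) M.init w a hw le_rfl
    refine ⟨b, ?_⟩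
    show phi M r1 r2 c (w ++ [a]).length M.init (w ++ [a]) = PHI w ++ [b]
    have hlen : (w ++ [a]).length = w.length + 1 := by simp
    rw [hlen, hb]
    show phi M r1 r2 c (w.length + 1) M.init w ++ [b] = PHI w ++ [b]
    rw [phi_fuel H1 H2 w.length M.init w hw0 le_rfl]
  -- vertex map
  set fV : M.pathTree.V → N.pathTree.V := fun x => ⟨PHI x.1, hΦmem x.1 x.2⟩ with hfV
  have hfVbij : Function.Bijective fV := by
    constructor
    · intro x y hxy
      apply Subtype.ext
      have h1 : PHI x.1 = PHI y.1 := congrArg Subtype.val hxy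
      rw [← hΨΦ x.1 x.2, ← hΨΦ y.1 y.2, h1]
    · intro y
      refine ⟨⟨PSI y.1, hΨmem y.1 y.2⟩, Subtype.ext ?_⟩
      exact hΦΨ y.1 y.2
  -- edge map
  have hEmem : ∀ e : M.pathTree.E,
      PHI e.1.1 ++ [(PHI (e.1.1 ++ [e.1.2])).getLastD e.1.2] = PHI (e.1.1 ++ [e.1.2]) := by
    intro e
    obtain ⟨b, hb⟩ := hsnoc e.1.1 e.1.2 e.2
    rw [hb, List.getLastD_concat]
  set fE : M.pathTree.E → N.pathTree.E := fun e =>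
    ⟨(PHI e.1.1, (PHI (e.1.1 ++ [e.1.2])).getLastD e.1.2), by
      show (N.run N.init (PHI e.1.1 ++ [(PHI (e.1.1 ++ [e.1.2])).getLastD e.1.2])).isSome
      rw [hEmem e]
      exact hΦmem _ e.2⟩ with hfE
  have hPHIinj : ∀ w w', (M.run M.init w).isSome → (M.run M.init w').isSome →
      PHI w = PHI w' → w = w' := by
    intro w w' hw hw' h
    rw [← hΨΦ w hw, ← hΨΦ w' hw', h]
  have hfEbij : Function.Bijective fE := by
    constructor
    · intro e e' he
      have h1 : PHI e.1.1 = PHI e'.1.1 := congrArg (fun z => z.1.1) he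
      have h2 : (PHI (e.1.1 ++ [e.1.2])).getLastD e.1.2
          = (PHI (e'.1.1 ++ [e'.1.2])).getLastD e'.1.2 := congrArg (fun z => z.1.2) he
      have hww : e.1.1 = e'.1.1 :=
        hPHIinj _ _ (M.isSome_of_append e.2) (M.isSome_of_append e'.2) h1
      have h3 : PHI (e.1.1 ++ [e.1.2]) = PHI (e'.1.1 ++ [e'.1.2]) := by
        rw [← hEmem e, ← hEmem e', h1, h2]
      have h4 : e.1.1 ++ [e.1.2] = e'.1.1 ++ [e'.1.2] := hPHIinj _ _ e.2 e'.2 h3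
      apply Subtype.ext
      apply Prod.ext hww
      have := List.append_inj_right h4 (by rw [hww])
      simpa using this
    · intro y
      obtain ⟨⟨u, b⟩, hy⟩ := y
      have hz : (M.run M.init (PSI (u ++ [b]))).isSome := hΨmem _ hy
      have hzlen : (PSI (u ++ [b])).length = u.length + 1 := by
        rw [hΨlen _ hy]; simp
      have hznil : PSI (u ++ [b]) ≠ [] := by
        intro h; rw [h] at hzlen; simp at hzlen
      set z : List A := PSI (u ++ [b]) with hzdef
      obtain ⟨w, a, hsplit⟩ : ∃ w a, z = w ++ [a] :=
        ⟨z.dropLast, z.getLast hznil, (List.dropLast_append_getLast hznil).symm⟩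
      have hw : (M.run M.init w).isSome := M.isSome_of_append (by rw [← hsplit]; exact hz)
      have hwa : (M.run M.init (w ++ [a])).isSome := by rw [← hsplit]; exact hz
      have hΦz : PHI z = u ++ [b] := hΦΨ _ hy
      obtain ⟨b0, hb0⟩ := hsnoc w a hwa
      have hkey : PHI w ++ [b0] = u ++ [b] := by rw [← hb0, ← hsplit, hΦz]
      have hlenw : (PHI w).length = u.length := by
        rw [hΦlen w hw]
        have := congrArg List.length hsplit
        simp at this
        omega
      obtain ⟨hu, hb⟩ := List.append_inj hkey hlenw
      have hbb : b0 = b := by simpa using hb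
      refine ⟨⟨(w, a), hwa⟩, Subtype.ext (Prod.ext ?_ ?_)⟩
      · exact hu
      · show (PHI (w ++ [a])).getLastD a = b
        rw [hb0, List.getLastD_concat, hbb]
  have hiso : RGraph.Iso M.pathTree N.pathTree := by
    refine ⟨⟨fV, fE, ?_, ?_, ?_⟩, hfVbij, hfEbij⟩
    · exact Subtype.ext rfl
    · intro x
      exact Subtype.ext rfl
    · intro x
      exact Subtype.ext (hEmem x)
  have hcard := hM A hfin hne N hiso
  haveI := M.finQ
  haveI := M.neQ
  have hlt : Nat.card N.Q < Nat.card M.Q := by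
    have : ¬ (r2 ≠ r2) := fun h => h rfl
    exact Finite.card_subtype_lt this
  have hpos : 0 < Nat.card M.Q := Nat.card_pos
  omega

lemma aut_state_eq (hfin : Finite A) (hne : Nonempty A) {M : PDFA A}
    (hM : M.GeomMinimal) {g : Equiv.Perm M.pathTree.V} (hg : g ∈ M.pathTree.autGroup) :
    ∀ v : M.pathTree.V, M.run M.init (g v).1 = M.run M.init v.1 := by
  intro v
  by_contra hne'
  have h1 : st (g v) ≠ st v := by
    intro h
    apply hne'
    rw [← Option.some_get (g v).2, ← Option.some_get v.2]
    exact congrArg some h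
  rcases eq_or_ne M.init (st v) with hinit | hinit
  · refine card_contra hfin hne hM (inv_mem hg) (g v) ?_ ?_
    · rw [(Equiv.Perm.inv_eq_iff_eq.mpr rfl)]
      exact h1.symm
    · intro h
      apply h1
      rw [← h, hinit]
  · exact card_contra hfin hne hM hg v h1 hinit

end S15
/-- Portraits of automorphisms for geometrically minimal DFAs.
Let `M` be a geometrically minimal DFA with language `ℒ` and path language tree `T`.
A portrait `σ = (ᵛσ)` (a family of injections `ᵛσ : Σ(v) → Σ`) defines an automorphism
of `T` if and only if it is admissible: for every `v ∈ ℒ`, `ᵛσ` is a permutation of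
`Σ(q(v))` satisfying `δ(q(v), ᵛσ(α)) = δ(q(v), α)` for all `α ∈ Σ(v)`. -/
theorem stmt15 {A : Type} (hfin : Finite A) (hne : Nonempty A)
    (M : PDFA A) (hM : M.GeomMinimal)
    (σ : List A → A → A)
    (hσ : ∀ v : M.pathTree.V, Set.InjOn (σ v.1) {a | v.1 ++ [a] ∈ M.Lang}) :
    (∃ g ∈ M.pathTree.autGroup,
      ∀ (w v : M.pathTree.V) (a : A), w.1 = v.1 ++ [a] →
        (g w).1 = (g v).1 ++ [σ v.1 a]) ↔
    (∀ v : M.pathTree.V,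
      Set.BijOn (σ v.1) {a | (M.δ (M.qstate v.1 v.2) a).isSome}
        {a | (M.δ (M.qstate v.1 v.2) a).isSome} ∧
      ∀ a : A, v.1 ++ [a] ∈ M.Lang →
        M.δ (M.qstate v.1 v.2) (σ v.1 a) = M.δ (M.qstate v.1 v.2) a) := by
  haveI := hfin
  constructor
  · rintro ⟨g, hg, hcomp⟩
    have hstate := S15.aut_state_eq hfin hne hM hg
    intro v
    have key : ∀ a : A, v.1 ++ [a] ∈ M.Lang →
        M.δ (M.qstate v.1 v.2) (σ v.1 a) = M.δ (M.qstate v.1 v.2) a := by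
      intro a ha
      have hmem : (M.run M.init (v.1 ++ [a])).isSome := ha
      have hgw := hcomp ⟨v.1 ++ [a], hmem⟩ v a rfl
      have hqgv : M.qstate (g v).1 (g v).2 = M.qstate v.1 v.2 :=
        S15.qstate_congr _ _ (hstate v)
      have e1 : M.run M.init ((g v).1 ++ [σ v.1 a])
          = M.δ (M.qstate v.1 v.2) (σ v.1 a) := by
        rw [S15.run_init_snoc _ _ (g v).2, hqgv]
      rw [← e1, ← hgw, hstate ⟨v.1 ++ [a], hmem⟩]
      exact S15.run_init_snoc v.1 a v.2
    refine ⟨?_, key⟩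
    have hsetEq : {a : A | v.1 ++ [a] ∈ M.Lang}
        = {a | (M.δ (M.qstate v.1 v.2) a).isSome} := by
      ext a
      show (M.run M.init (v.1 ++ [a])).isSome ↔ _
      rw [S15.run_init_snoc v.1 a v.2]
      rfl
    have hmapsto : Set.MapsTo (σ v.1) {a | (M.δ (M.qstate v.1 v.2) a).isSome}
        {a | (M.δ (M.qstate v.1 v.2) a).isSome} := by
      intro a ha
      have hl : v.1 ++ [a] ∈ M.Lang := by
        show (M.run M.init (v.1 ++ [a])).isSome
        rw [S15.run_init_snoc v.1 a v.2]
        exact ha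
      show (M.δ (M.qstate v.1 v.2) (σ v.1 a)).isSome
      rw [key a hl]
      exact ha
    have hinj : Set.InjOn (σ v.1) {a | (M.δ (M.qstate v.1 v.2) a).isSome} := by
      rw [← hsetEq]
      exact hσ v
    exact (Set.Finite.injOn_iff_bijOn_of_mapsTo (Set.toFinite _) hmapsto).mp hinj
  · intro hadm
    exact S15.easy_dir σ hσ hadm
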